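/- arXiv:math/0505396 — 2 statements merged into one kernel-verified Lean document; each statement's English description precedes it below -/
import Mathlib

section
/- There exists an absolute constant C > 0 such that for every real K ≥ 1, every integer T ≥ 1, every strictly increasing sequence of positive integers (s_n), and every sequence of complex numbers (γ_n) with |γ_n| ≤ 1, one has ∑_{k ≤ K} ∑_{1 ≤ c ≤ k, gcd(c,k)=1} |∑_{n ≤ T} γ_n e_k(c s_n)|² ≤ C · (K² + s_T) · T. -/
open Finset
open scoped Classical

/-- `eexp m z = e^{2πiz/m}`. -/
noncomputable def eexp (m : ℕ) (z : ℤ) : ℂ :=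
  Complex.exp (2 * Real.pi * Complex.I * z / m)

open Complex MeasureTheory intervalIntegral
open scoped Real
set_option maxHeartbeats 1000000

lemma cont_exp_lin (c : ℂ) : Continuous fun x : ℝ => Complex.exp (c * x) :=
  Complex.continuous_exp.comp (continuous_const.mul Complex.continuous_ofReal)

noncomputable def trig (a : ℕ → ℂ) (s : ℕ → ℕ) (T : ℕ) (x : ℝ) : ℂ :=
  ∑ n ∈ Finset.Icc 1 T, a n * Complex.exp (2 * π * I * (s n) * x)

lemma trig_cont (a : ℕ → ℂ) (s : ℕ → ℕ) (T : ℕ) : Continuous (trig a s T) := by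
  unfold trig
  apply continuous_finset_sum
  intro n _
  exact continuous_const.mul ((Complex.continuous_exp).comp (by fun_prop))

lemma exp_hasDerivAt (c : ℂ) (x : ℝ) :
    HasDerivAt (fun y : ℝ => Complex.exp (c * y)) (c * Complex.exp (c * x)) x := by
  have h1 : HasDerivAt (fun z : ℂ => Complex.exp (c * z)) (Complex.exp (c * x) * c) (x : ℂ) :=
    (Complex.hasDerivAt_exp _).comp (x : ℂ)
      (by have h := (hasDerivAt_id (x : ℂ)).const_mul c; simp only [mul_one] at h; exact h)
  simpa [mul_comm] using h1.comp_ofReal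

lemma trig_deriv (a : ℕ → ℂ) (s : ℕ → ℕ) (T : ℕ) (x : ℝ) :
    HasDerivAt (trig a s T) (trig (fun n => a n * (2 * π * I * (s n))) s T x) x := by
  unfold trig
  apply HasDerivAt.fun_sum
  intro n _
  have := (exp_hasDerivAt (2 * π * I * (s n)) x).const_mul (a n)
  refine this.congr_deriv ?_
  beta_reduce
  ring

lemma normSq_hasDerivAt {f f' : ℝ → ℂ} {x : ℝ} (hf : HasDerivAt f (f' x) x) :
    HasDerivAt (fun u => Complex.normSq (f u))
      (2 * ((starRingEnd ℂ) (f x) * f' x).re) x := by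
  have hre : HasDerivAt (fun u => (f u).re) ((f' x).re) x :=
    Complex.reCLM.hasFDerivAt.comp_hasDerivAt x hf
  have him : HasDerivAt (fun u => (f u).im) ((f' x).im) x :=
    Complex.imCLM.hasFDerivAt.comp_hasDerivAt x hf
  have h : HasDerivAt (fun u => (f u).re * (f u).re + (f u).im * (f u).im)
      ((f' x).re * (f x).re + (f x).re * (f' x).re +
        ((f' x).im * (f x).im + (f x).im * (f' x).im)) x := (hre.mul hre).add (him.mul him)
  have heq : (fun u => Complex.normSq (f u)) =
      (fun u => (f u).re * (f u).re + (f u).im * (f u).im) := by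
    funext u; simp [Complex.normSq_apply]
  rw [heq]
  convert h using 1
  simp [Complex.mul_re, Complex.conj_re, Complex.conj_im]
  ring

lemma key_integral (d : ℤ) :
    ∫ x in (-1:ℝ)..2, Complex.exp ((2*π*I*d) * x) = if d = 0 then 3 else 0 := by
  by_cases hd : d = 0
  · simp [hd]
    norm_num
  · rw [if_neg hd]
    have hc : (2*π*I*(d:ℂ)) ≠ 0 := by
      simp [Real.pi_ne_zero, Complex.I_ne_zero, hd]
    rw [integral_exp_mul_complex hc]
    have h2 : (2*π*I*(d:ℂ)) * (2:ℝ) = (2*d : ℤ) * (2 * π * I) := by push_cast; ring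
    have h1 : (2*π*I*(d:ℂ)) * ((-1:ℝ)) = (-d : ℤ) * (2 * π * I) := by push_cast; ring
    rw [h2, h1, Complex.exp_int_mul_two_pi_mul_I, Complex.exp_int_mul_two_pi_mul_I]
    simp

lemma parseval_c (a : ℕ → ℂ) (s : ℕ → ℕ) (T : ℕ) (hs : Function.Injective s) :
    ∫ x in (-1:ℝ)..2, (trig a s T x * (starRingEnd ℂ) (trig a s T x)) =
      3 * ∑ n ∈ Finset.Icc 1 T, (Complex.normSq (a n) : ℂ) := by
  have hint : ∀ x : ℝ, trig a s T x * (starRingEnd ℂ) (trig a s T x) =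
      ∑ n ∈ Finset.Icc 1 T, ∑ m ∈ Finset.Icc 1 T,
        a n * (starRingEnd ℂ) (a m) * Complex.exp ((2*π*I*(((s n : ℤ) - (s m : ℤ)):ℂ)) * x) := by
    intro x
    unfold trig
    rw [map_sum, Finset.sum_mul_sum]
    apply Finset.sum_congr rfl; intro n _
    apply Finset.sum_congr rfl; intro m _
    have hc : (starRingEnd ℂ) (2 * π * I * (s m) * x) = -(2 * π * I * (s m) * x) := by
      simp only [map_mul, Complex.conj_I, Complex.conj_ofReal, map_ofNat,
        Complex.conj_natCast]
      ring
    have he : (2 * π * I * (s n) * x) + -(2 * π * I * (s m) * x)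
        = (2*π*I*(((s n : ℤ) - (s m : ℤ)):ℂ)) * x := by push_cast; ring
    rw [map_mul, ← Complex.exp_conj, hc, mul_mul_mul_comm, ← Complex.exp_add, he]
  simp only [hint]
  rw [intervalIntegral.integral_finset_sum (μ := MeasureTheory.volume)
    (f := fun n x => ∑ m ∈ Finset.Icc 1 T,
      a n * (starRingEnd ℂ) (a m) * Complex.exp ((2*π*I*(((s n : ℤ) - (s m : ℤ)):ℂ)) * x))
    (fun n _ => (continuous_finset_sum _ (fun m _ =>
      continuous_const.mul (cont_exp_lin _))).intervalIntegrable _ _)]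
  have : ∀ n ∈ Finset.Icc 1 T,
      (∫ x in (-1:ℝ)..2, ∑ m ∈ Finset.Icc 1 T,
        a n * (starRingEnd ℂ) (a m) * Complex.exp ((2*π*I*(((s n : ℤ) - (s m : ℤ)):ℂ)) * x))
      = 3 * (Complex.normSq (a n) : ℂ) := by
    intro n hn
    rw [intervalIntegral.integral_finset_sum (μ := MeasureTheory.volume)
      (f := fun m x => a n * (starRingEnd ℂ) (a m) *
        Complex.exp ((2*π*I*(((s n : ℤ) - (s m : ℤ)):ℂ)) * x))
      (fun m _ => (continuous_const.mul (cont_exp_lin _)).intervalIntegrable _ _)]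
    have hterm : ∀ m ∈ Finset.Icc 1 T,
        (∫ x in (-1:ℝ)..2,
          a n * (starRingEnd ℂ) (a m) * Complex.exp ((2*π*I*(((s n : ℤ) - (s m : ℤ)):ℂ)) * x))
        = if m = n then 3 * (Complex.normSq (a n) : ℂ) else 0 := by
      intro m _
      rw [intervalIntegral.integral_const_mul]
      have := key_integral ((s n : ℤ) - (s m : ℤ))
      rw [show ((((s n : ℤ) - (s m : ℤ)) : ℤ) : ℂ) = (((s n : ℤ):ℂ) - ((s m : ℤ):ℂ)) by push_cast; ring] at this
      rw [this]
      by_cases hmn : m = n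
      · subst hmn
        rw [if_pos (by ring), if_pos rfl, Complex.mul_conj]
        ring
      · rw [if_neg, if_neg hmn]
        · ring
        · intro h
          apply hmn
          exact (hs (by exact_mod_cast sub_eq_zero.mp h)).symm
    rw [Finset.sum_congr rfl hterm, Finset.sum_ite_eq' (Finset.Icc 1 T) n
      (fun _ => 3 * (Complex.normSq (a n) : ℂ)), if_pos hn]
  rw [Finset.sum_congr rfl this, Finset.mul_sum]

lemma parseval (a : ℕ → ℂ) (s : ℕ → ℕ) (T : ℕ) (hs : Function.Injective s) :
    ∫ x in (-1:ℝ)..2, Complex.normSq (trig a s T x) =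
      3 * ∑ n ∈ Finset.Icc 1 T, Complex.normSq (a n) := by
  have h := parseval_c a s T hs
  have h2 : ∀ x : ℝ, trig a s T x * (starRingEnd ℂ) (trig a s T x)
      = ((Complex.normSq (trig a s T x) : ℝ) : ℂ) := fun x => Complex.mul_conj _
  simp only [h2] at h
  rw [intervalIntegral.integral_ofReal] at h
  exact_mod_cast h

lemma amgm {B : ℝ} (hB : 0 < B) (x y : ℝ) : 2*(x*y) ≤ B*x^2 + B⁻¹*y^2 := by
  have h1 : B * B⁻¹ = 1 := mul_inv_cancel₀ hB.ne'
  nlinarith [sq_nonneg (B*x - y), sq_nonneg (B*x + y), mul_pos hB hB]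

lemma gallagher (a : ℕ → ℂ) (s : ℕ → ℕ) (T : ℕ) (p δ B : ℝ) (hδ : 0 < δ) (hB : 0 < B) :
    Complex.normSq (trig a s T p) ≤
      (1/δ) * (∫ x in (p - δ/2)..(p + δ/2), Complex.normSq (trig a s T x))
      + ∫ x in (p - δ/2)..(p + δ/2),
          (B * Complex.normSq (trig a s T x)
            + B⁻¹ * Complex.normSq (trig (fun n => a n * (2 * π * I * (s n))) s T x)) := by
  set f := trig a s T with hf
  set f' := trig (fun n => a n * (2 * π * I * (s n))) s T with hf'
  set D := fun u : ℝ => 2 * (((starRingEnd ℂ) (f u)) * f' u).re with hDdef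
  have hcf : Continuous f := trig_cont _ _ _
  have hcf' : Continuous f' := trig_cont _ _ _
  have hDcont : Continuous D := by
    apply continuous_const.mul
    exact Complex.continuous_re.comp ((Complex.continuous_conj.comp hcf).mul hcf')
  have hD : ∀ u : ℝ, HasDerivAt (fun v => Complex.normSq (f v)) (D u) u :=
    fun u => normSq_hasDerivAt (trig_deriv a s T u)
  have hDle : ∀ u : ℝ, |D u| ≤ B * Complex.normSq (f u) + B⁻¹ * Complex.normSq (f' u) := by
    intro u
    have h1 : |D u| ≤ 2 * (‖f u‖ * ‖f' u‖) := by
      rw [hDdef]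
      rw [abs_mul, show |(2:ℝ)| = 2 by norm_num]
      apply mul_le_mul_of_nonneg_left _ (by norm_num)
      calc |(((starRingEnd ℂ) (f u)) * f' u).re| ≤ ‖((starRingEnd ℂ) (f u)) * f' u‖ :=
            Complex.abs_re_le_norm _
        _ = ‖f u‖ * ‖f' u‖ := by rw [norm_mul, Complex.norm_conj]
    refine h1.trans ?_
    have := amgm hB (‖f u‖) (‖f' u‖)
    rwa [Complex.sq_norm, Complex.sq_norm] at this
  set lo := p - δ/2 with hlo
  set hi := p + δ/2 with hhi
  have hab : lo ≤ hi := by rw [hlo, hhi]; linarith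
  have hpmem : p ∈ Set.Icc lo hi := by constructor <;> [rw [hlo]; rw [hhi]] <;> linarith
  set J := ∫ x in lo..hi, |D x| with hJ
  have hkey : ∀ t ∈ Set.Icc lo hi, Complex.normSq (f p) - J ≤ Complex.normSq (f t) := by
    intro t ht
    have hftc : ∫ u in t..p, D u = Complex.normSq (f p) - Complex.normSq (f t) :=
      intervalIntegral.integral_eq_sub_of_hasDerivAt (fun u _ => hD u)
        (hDcont.intervalIntegrable _ _)
    have habs : |∫ u in t..p, D u| ≤ J := by
      have h2 : ‖∫ u in t..p, D u‖ ≤ |∫ u in t..p, ‖D u‖| :=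
        intervalIntegral.norm_integral_le_abs_integral_norm
      simp only [Real.norm_eq_abs] at h2
      refine h2.trans ?_
      rcases le_total t p with h | h
      · rw [_root_.abs_of_nonneg (intervalIntegral.integral_nonneg h (fun u _ => abs_nonneg _))]
        exact intervalIntegral.integral_mono_interval ht.1 h hpmem.2
          (MeasureTheory.ae_of_all _ (fun u => abs_nonneg _)) ((hDcont.abs).intervalIntegrable _ _)
      · rw [intervalIntegral.integral_symm,
          abs_neg, _root_.abs_of_nonneg (intervalIntegral.integral_nonneg h (fun u _ => abs_nonneg _))]
        exact intervalIntegral.integral_mono_interval hpmem.1 h ht.2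
          (MeasureTheory.ae_of_all _ (fun u => abs_nonneg _)) ((hDcont.abs).intervalIntegrable _ _)
    have h3 := le_of_abs_le habs
    rw [hftc] at h3
    linarith
  have hint : ((Complex.normSq (f p) - J)) * δ ≤ ∫ t in lo..hi, Complex.normSq (f t) := by
    have h0 := intervalIntegral.integral_mono_on hab
      (intervalIntegrable_const (μ := MeasureTheory.volume))
      (((Complex.continuous_normSq.comp hcf)).intervalIntegrable _ _)
      hkey
    rw [intervalIntegral.integral_const, smul_eq_mul] at h0
    have : hi - lo = δ := by rw [hlo, hhi]; ring
    rw [this] at h0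
    simp only [Function.comp_apply] at h0
    linarith [h0]
  have hJle : J ≤ ∫ x in lo..hi,
      (B * Complex.normSq (f x) + B⁻¹ * Complex.normSq (f' x)) := by
    apply intervalIntegral.integral_mono_on hab ((hDcont.abs).intervalIntegrable _ _)
    · apply Continuous.intervalIntegrable
      exact (continuous_const.mul (Complex.continuous_normSq.comp hcf)).add
        (continuous_const.mul (Complex.continuous_normSq.comp hcf'))
    · exact fun u _ => hDle u
  have hδ' : (0:ℝ) < 1/δ := by positivity
  have := mul_le_mul_of_nonneg_left hint (le_of_lt hδ')
  rw [show (1/δ) * ((Complex.normSq (f p) - J) * δ) = Complex.normSq (f p) - J by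
    field_simp] at this
  linarith

lemma farey_spacing {k c k' c' : ℕ} {K : ℝ} (hK : 1 ≤ K)
    (hc1 : 1 ≤ c) (hck : c ≤ k) (hc1' : 1 ≤ c') (hck' : c' ≤ k')
    (hg : Nat.gcd c k = 1) (hg' : Nat.gcd c' k' = 1)
    (hkK : (k : ℝ) ≤ K) (hk'K : (k' : ℝ) ≤ K)
    (hne : ¬ (k = k' ∧ c = c')) :
    1 / K ^ 2 ≤ |(c : ℝ) / k - (c' : ℝ) / k'| := by
  have hk1 : 1 ≤ k := hc1.trans hck
  have hk1' : 1 ≤ k' := hc1'.trans hck'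
  have hk0 : (0:ℝ) < k := by exact_mod_cast hk1
  have hk0' : (0:ℝ) < k' := by exact_mod_cast hk1'
  have hnum : c * k' ≠ c' * k := by
    intro h
    apply hne
    have hkk' : k ∣ k' := by
      have h1 : k ∣ c * k' := h ▸ Dvd.intro c' (by ring)
      exact (Nat.Coprime.dvd_of_dvd_mul_left (Nat.coprime_comm.mp hg) h1)
    have hk'k : k' ∣ k := by
      have h1 : k' ∣ c' * k := h ▸ Dvd.intro c (by ring)
      exact (Nat.Coprime.dvd_of_dvd_mul_left (Nat.coprime_comm.mp hg') h1)
    have hkk : k = k' := Nat.dvd_antisymm hkk' hk'k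
    refine ⟨hkk, ?_⟩
    subst hkk
    exact Nat.eq_of_mul_eq_mul_right (by omega) h
  have hd : (1:ℝ) ≤ |(c:ℝ) * k' - (k:ℝ) * c'| := by
    have : ((c:ℤ) * k' - (k:ℤ) * c') ≠ 0 := by
      intro h
      exact hnum (by rw [mul_comm (k:ℤ) (c':ℤ)] at h; exact_mod_cast sub_eq_zero.mp h)
    have h1 : (1:ℤ) ≤ |(c:ℤ) * k' - (k:ℤ) * c'| := Int.one_le_abs this
    calc (1:ℝ) ≤ ((|(c:ℤ) * k' - (k:ℤ) * c'| : ℤ) : ℝ) := by exact_mod_cast h1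
      _ = |(c:ℝ) * k' - (k:ℝ) * c'| := by push_cast [Int.cast_abs]; norm_num
  rw [div_sub_div _ _ hk0.ne' hk0'.ne', abs_div, abs_of_pos (by positivity : (0:ℝ) < (k:ℝ)*k')]
  rw [div_le_div_iff₀ (by positivity) (by positivity)]
  calc 1 * ((k:ℝ) * k') = (k:ℝ) * k' := by ring
    _ ≤ K ^ 2 := by nlinarith
    _ ≤ |(c:ℝ) * k' - (k:ℝ) * c'| * K ^ 2 := by nlinarith [hd, sq_nonneg K]

lemma intIoo {a b : ℝ} (h : a ≤ b) (f : ℝ → ℝ) :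
    ∫ x in a..b, f x = ∫ x in Set.Ioo a b, f x := by
  rw [intervalIntegral.integral_of_le h, MeasureTheory.integral_Ioc_eq_integral_Ioo]

theorem stmt5 :
    ∃ C : ℝ, 0 < C ∧
      ∀ (K : ℝ) (T : ℕ) (s : ℕ → ℕ) (γ : ℕ → ℂ),
        1 ≤ K → 1 ≤ T → StrictMono s → (∀ n, 0 < s n) →
        (∀ n, ‖γ n‖ ≤ 1) →
        ∑ k ∈ Finset.Icc 1 ⌊K⌋₊,
          ∑ c ∈ (Finset.Icc 1 k).filter (fun c => Nat.gcd c k = 1),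
            ‖∑ n ∈ Finset.Icc 1 T, γ n * eexp k (c * s n)‖ ^ 2
          ≤ C * ((K ^ 2 + (s T : ℝ)) * T) := by
  refine ⟨38, by norm_num, ?_⟩
  intro K T s γ hK hT hs hspos hγ
  set K' := ⌊K⌋₊ with hK'
  set δ := 1 / K ^ 2 with hδdef
  have hδ : 0 < δ := by positivity
  have hδ1 : δ ≤ 1 := by
    rw [hδdef]
    rw [div_le_one (by positivity)]
    nlinarith
  have hsT1 : (1:ℝ) ≤ (s T : ℝ) := by exact_mod_cast hspos T
  set B := 2 * π * (s T : ℝ) with hBdef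
  have hB : 0 < B := by
    have := Real.pi_pos
    rw [hBdef]; positivity
  set a' : ℕ → ℂ := fun n => γ n * (2 * π * I * (s n)) with ha'
  set nf : ℝ → ℝ := fun x => Complex.normSq (trig γ s T x) with hnf
  set nf' : ℝ → ℝ := fun x => Complex.normSq (trig a' s T x) with hnf'
  set gg : ℝ → ℝ := fun x => B * nf x + B⁻¹ * nf' x with hgg
  have hcnf : Continuous nf := Complex.continuous_normSq.comp (trig_cont _ _ _)
  have hcnf' : Continuous nf' := Complex.continuous_normSq.comp (trig_cont _ _ _)
  have hcgg : Continuous gg :=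
    (continuous_const.mul hcnf).add (continuous_const.mul hcnf')
  -- the Farey points
  set p : (Σ _ : ℕ, ℕ) → ℝ := fun x => (x.2 : ℝ) / x.1 with hp
  set A : (Σ _ : ℕ, ℕ) → Set ℝ := fun x => Set.Ioo (p x - δ/2) (p x + δ/2) with hA
  set P := (Finset.Icc 1 K').sigma
    (fun k => (Finset.Icc 1 k).filter (fun c => Nat.gcd c k = 1)) with hP
  have hmem : ∀ x ∈ P, 1 ≤ x.2 ∧ x.2 ≤ x.1 ∧ Nat.gcd x.2 x.1 = 1 ∧ ((x.1:ℝ) ≤ K) := by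
    intro x hx
    rw [hP, Finset.mem_sigma] at hx
    obtain ⟨h1, h2⟩ := hx
    rw [Finset.mem_filter, Finset.mem_Icc] at h2
    rw [Finset.mem_Icc] at h1
    refine ⟨h2.1.1, h2.1.2, h2.2, ?_⟩
    exact (Nat.le_floor_iff (by linarith)).mp h1.2
  have hprange : ∀ x ∈ P, 0 < p x ∧ p x ≤ 1 := by
    intro x hx
    obtain ⟨h1, h2, _, _⟩ := hmem x hx
    have hx1 : (0:ℝ) < x.1 := by
      have : 1 ≤ x.1 := h1.trans h2
      exact_mod_cast this
    constructor
    · apply div_pos (by exact_mod_cast h1) hx1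
    · rw [div_le_one hx1]; exact_mod_cast h2
  have hAsub : ∀ x ∈ P, A x ⊆ Set.Icc (-1:ℝ) 2 := by
    intro x hx
    obtain ⟨h1, h2⟩ := hprange x hx
    intro z hz
    rw [hA] at hz
    obtain ⟨hz1, hz2⟩ := hz
    constructor <;> linarith
  have hdisj : Set.Pairwise ↑P (Function.onFun Disjoint A) := by
    intro x hx y hy hxy
    rw [Function.onFun, hA, Set.disjoint_left]
    intro z hz1 hz2
    simp only [Set.mem_Ioo] at hz1 hz2
    have habs : |p x - p y| < δ := by
      rw [abs_sub_lt_iff]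
      constructor <;> linarith [hz1.1, hz1.2, hz2.1, hz2.2]
    obtain ⟨ha1, ha2, ha3, ha4⟩ := hmem x (by exact_mod_cast hx)
    obtain ⟨hb1, hb2, hb3, hb4⟩ := hmem y (by exact_mod_cast hy)
    have hnexy : ¬ (x.1 = y.1 ∧ x.2 = y.2) := by
      rintro ⟨h1, h2⟩
      apply hxy
      rcases x with ⟨k, c⟩; rcases y with ⟨k', c'⟩
      simp only at h1 h2
      subst h1; subst h2; rfl
    have := farey_spacing hK ha1 ha2 hb1 hb2 ha3 hb3 ha4 hb4 (by
      rintro ⟨h1, h2⟩; exact hnexy ⟨h1, h2⟩)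
    rw [hp] at habs
    rw [hδdef] at habs
    simp only at habs this
    linarith
  -- pointwise Gallagher bound
  have hpt : ∀ x ∈ P, Complex.normSq (trig γ s T (p x)) ≤
      K ^ 2 * (∫ y in A x, nf y) + ∫ y in A x, gg y := by
    intro x hx
    have hle : p x - δ/2 ≤ p x + δ/2 := by linarith
    have hG := gallagher γ s T (p x) δ B hδ hB
    rw [intIoo hle, intIoo hle] at hG
    have h1δ : 1 / δ = K ^ 2 := by rw [hδdef]; rw [one_div_one_div]
    rw [h1δ] at hG
    exact hG
  -- summing the set integrals
  have hsum : ∀ F : ℝ → ℝ, Continuous F → (∀ y, 0 ≤ F y) →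
      ∑ x ∈ P, ∫ y in A x, F y ≤ ∫ y in Set.Icc (-1:ℝ) 2, F y := by
    intro F hFc hF0
    rw [← MeasureTheory.integral_biUnion_finset P (fun x _ => measurableSet_Ioo)
      hdisj (fun x hx => (hFc.integrableOn_Icc.mono_set (hAsub x hx)))]
    apply MeasureTheory.setIntegral_mono_set hFc.integrableOn_Icc
      (MeasureTheory.ae_of_all _ hF0)
    apply HasSubset.Subset.eventuallyLE
    intro z hz
    simp only [Set.mem_iUnion] at hz
    obtain ⟨x, hx, hzx⟩ := hz
    exact hAsub x hx hzx
  -- Parseval evaluations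
  have hIcc_eq : ∀ F : ℝ → ℝ, (∫ y in Set.Icc (-1:ℝ) 2, F y) = ∫ y in (-1:ℝ)..2, F y := by
    intro F
    rw [intervalIntegral.integral_of_le (by norm_num), MeasureTheory.integral_Icc_eq_integral_Ioc]
  have hPv1 : (∫ y in Set.Icc (-1:ℝ) 2, nf y) = 3 * ∑ n ∈ Finset.Icc 1 T,
      Complex.normSq (γ n) := by
    rw [hIcc_eq]; exact parseval γ s T hs.injective
  have hPv2 : (∫ y in Set.Icc (-1:ℝ) 2, nf' y) = 3 * ∑ n ∈ Finset.Icc 1 T,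
      Complex.normSq (a' n) := by
    rw [hIcc_eq]; exact parseval a' s T hs.injective
  have hPvg : (∫ y in Set.Icc (-1:ℝ) 2, gg y) =
      B * (3 * ∑ n ∈ Finset.Icc 1 T, Complex.normSq (γ n))
        + B⁻¹ * (3 * ∑ n ∈ Finset.Icc 1 T, Complex.normSq (a' n)) := by
    rw [hgg]
    rw [MeasureTheory.integral_add ((hcnf.integrableOn_Icc).const_mul B)
      ((hcnf'.integrableOn_Icc).const_mul B⁻¹),
      MeasureTheory.integral_const_mul, MeasureTheory.integral_const_mul, hPv1, hPv2]
  -- coefficient sum bounds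
  have hSγ : ∑ n ∈ Finset.Icc 1 T, Complex.normSq (γ n) ≤ T := by
    calc ∑ n ∈ Finset.Icc 1 T, Complex.normSq (γ n) ≤ ∑ _n ∈ Finset.Icc 1 T, (1:ℝ) := by
          apply Finset.sum_le_sum
          intro n _
          rw [← Complex.sq_norm]
          nlinarith [hγ n, norm_nonneg (γ n)]
      _ = T := by simp
  have hSγ0 : 0 ≤ ∑ n ∈ Finset.Icc 1 T, Complex.normSq (γ n) :=
    Finset.sum_nonneg (fun n _ => Complex.normSq_nonneg _)
  have hSγ' : ∑ n ∈ Finset.Icc 1 T, Complex.normSq (a' n) ≤ T * B ^ 2 := by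
    calc ∑ n ∈ Finset.Icc 1 T, Complex.normSq (a' n)
        ≤ ∑ _n ∈ Finset.Icc 1 T, B ^ 2 := by
          apply Finset.sum_le_sum
          intro n hn
          rw [ha']
          simp only
          rw [Complex.normSq_mul]
          have hab : Complex.normSq (2 * π * I * (s n : ℕ)) = (2 * π * (s n : ℝ)) ^ 2 := by
            rw [← Complex.sq_norm]
            congr 1
            simp only [norm_mul, Complex.norm_I, Complex.norm_real, Real.norm_eq_abs,
              Complex.norm_natCast, Complex.norm_ofNat]
            rw [abs_of_pos Real.pi_pos]
            ring
          rw [hab]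
          have hsn : (s n : ℝ) ≤ (s T : ℝ) := by
            exact_mod_cast hs.monotone (by
              rcases Finset.mem_Icc.mp hn with ⟨_, h2⟩; exact h2)
          have h1 : Complex.normSq (γ n) ≤ 1 := by
            rw [← Complex.sq_norm]
            nlinarith [hγ n, norm_nonneg (γ n)]
          have h2 : (2 * π * (s n : ℝ)) ^ 2 ≤ B ^ 2 := by
            rw [hBdef]
            have hπ := Real.pi_pos
            have hsn0 : (0:ℝ) ≤ (s n : ℝ) := Nat.cast_nonneg _
            nlinarith [mul_le_mul_of_nonneg_left hsn (by positivity : (0:ℝ) ≤ 4 * π ^ 2 * ((s n : ℝ) + (s T : ℝ)))]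
          nlinarith [Complex.normSq_nonneg (γ n), sq_nonneg (2 * π * (s n : ℝ))]
      _ = T * B ^ 2 := by simp [mul_comm]
  have hSγ'0 : 0 ≤ ∑ n ∈ Finset.Icc 1 T, Complex.normSq (a' n) :=
    Finset.sum_nonneg (fun n _ => Complex.normSq_nonneg _)
  -- rewrite the LHS
  have hLHS : ∑ k ∈ Finset.Icc 1 K',
      ∑ c ∈ (Finset.Icc 1 k).filter (fun c => Nat.gcd c k = 1),
        ‖∑ n ∈ Finset.Icc 1 T, γ n * eexp k (c * s n)‖ ^ 2
      = ∑ x ∈ P, Complex.normSq (trig γ s T (p x)) := by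
    rw [hP, Finset.sum_sigma]
    apply Finset.sum_congr rfl
    intro k hk
    apply Finset.sum_congr rfl
    intro c hc
    rw [Finset.mem_Icc] at hk
    have hk0 : (k:ℂ) ≠ 0 := by
      have : k ≠ 0 := by omega
      exact_mod_cast this
    rw [Complex.sq_norm]
    congr 1
    unfold trig
    apply Finset.sum_congr rfl
    intro n _
    congr 1
    unfold eexp
    congr 1
    rw [hp]
    push_cast
    field_simp
  rw [hLHS]
  calc ∑ x ∈ P, Complex.normSq (trig γ s T (p x))
      ≤ ∑ x ∈ P, (K ^ 2 * (∫ y in A x, nf y) + ∫ y in A x, gg y) :=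
        Finset.sum_le_sum hpt
    _ = K ^ 2 * (∑ x ∈ P, ∫ y in A x, nf y) + ∑ x ∈ P, ∫ y in A x, gg y := by
        rw [Finset.sum_add_distrib, Finset.mul_sum]
    _ ≤ K ^ 2 * (∫ y in Set.Icc (-1:ℝ) 2, nf y) + ∫ y in Set.Icc (-1:ℝ) 2, gg y := by
        apply add_le_add
        · apply mul_le_mul_of_nonneg_left _ (by positivity)
          exact hsum nf hcnf (fun y => Complex.normSq_nonneg _)
        · apply hsum gg hcgg
          intro y
          have h1 : 0 ≤ nf y := Complex.normSq_nonneg _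
          have h2 : 0 ≤ nf' y := Complex.normSq_nonneg _
          have : 0 ≤ B⁻¹ := by positivity
          rw [hgg]
          positivity
    _ ≤ 38 * ((K ^ 2 + (s T : ℝ)) * T) := by
        rw [hPv1, hPvg]
        have hπle : π ≤ 3.15 := by linarith [Real.pi_lt_d2]
        have hπpos := Real.pi_pos
        have hT1 : (1:ℝ) ≤ (T:ℝ) := by exact_mod_cast hT
        have hBinv : B⁻¹ * (3 * ∑ n ∈ Finset.Icc 1 T, Complex.normSq (a' n))
            ≤ 3 * T * B := by
          have h1 : B⁻¹ * (3 * ∑ n ∈ Finset.Icc 1 T, Complex.normSq (a' n))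
              ≤ B⁻¹ * (3 * (T * B ^ 2)) := by
            apply mul_le_mul_of_nonneg_left _ (by positivity)
            linarith
          have h2 : B⁻¹ * (3 * ((T:ℝ) * B ^ 2)) = 3 * T * B := by
            field_simp
          linarith
        have hKT : (1:ℝ) ≤ K ^ 2 := by nlinarith
        nlinarith [mul_le_mul_of_nonneg_left hSγ (by positivity : (0:ℝ) ≤ 3 * K ^ 2),
          mul_le_mul_of_nonneg_left hSγ (by positivity : (0:ℝ) ≤ 3 * B),
          mul_pos hB (by positivity : (0:ℝ) < (T:ℝ)),
          mul_le_mul_of_nonneg_left hT1 (by positivity : (0:ℝ) ≤ K ^ 2),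
          mul_le_mul_of_nonneg_right hsT1 (by positivity : (0:ℝ) ≤ (T:ℝ))]
end

section
/- Let λ ≥ 2 be an integer. There exists a constant C > 0 depending only on λ such that for every real Δ ≥ 2, the number of primes p with p ∤ λ whose multiplicative order t_p of λ modulo p satisfies t_p ≤ Δ is at most C · Δ² / log Δ. -/
open Finset

theorem stmt7 (lam : ℕ) (hlam : 2 ≤ lam) :
    ∃ C : ℝ, 0 < C ∧
      ∀ Δ : ℝ, 2 ≤ Δ →
        ({p : ℕ | p.Prime ∧ ¬ p ∣ lam ∧
            (orderOf (lam : ZMod p) : ℝ) ≤ Δ}.ncard : ℝ)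
          ≤ C * Δ ^ 2 / Real.log Δ := by
  classical
  have hloglam : (0:ℝ) ≤ Real.log lam := Real.log_nonneg (by exact_mod_cast hlam.trans' (by norm_num))
  refine ⟨1 + Real.log lam, by linarith, ?_⟩
  intro Δ hΔ
  set D := ⌊Δ⌋₊ with hDdef
  have hD2 : 2 ≤ D := Nat.le_floor (by exact_mod_cast hΔ)
  have hDΔ : (D:ℝ) ≤ Δ := Nat.floor_le (by linarith)
  have hΔD : Δ < (D:ℝ) + 1 := Nat.lt_floor_add_one Δ
  set N := ∏ t ∈ Finset.Icc 1 D, (lam ^ t - 1) with hNdef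
  have hNpos : 0 < N := by
    apply Finset.prod_pos
    intro t ht
    rw [Finset.mem_Icc] at ht
    have h2 : lam ≤ lam ^ t := Nat.le_self_pow (by omega) lam
    omega
  -- the set is contained in the prime factors of N
  have hsub : {p : ℕ | p.Prime ∧ ¬ p ∣ lam ∧ (orderOf (lam : ZMod p) : ℝ) ≤ Δ}
      ⊆ ↑N.primeFactors := by
    rintro p ⟨hp, hpl, hord⟩
    haveI : Fact p.Prime := ⟨hp⟩
    have hne : (lam : ZMod p) ≠ 0 := by
      simpa [ZMod.natCast_eq_zero_iff] using hpl
    set t := orderOf ((lam : ZMod p)) with htdef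
    have htpos : 0 < t := by
      have hfin : IsOfFinOrder ((lam : ZMod p)) := by
        refine isOfFinOrder_iff_pow_eq_one.2 ⟨p - 1, ?_, ZMod.pow_card_sub_one_eq_one hne⟩
        have := hp.two_le; omega
      exact hfin.orderOf_pos
    have htD : t ≤ D := Nat.le_floor (by exact_mod_cast hord)
    have hdvd : p ∣ lam ^ t - 1 := by
      have h1 : ((lam:ZMod p)) ^ t = 1 := pow_orderOf_eq_one _
      have hle : 1 ≤ lam ^ t := Nat.one_le_pow _ _ (by omega)
      have hz : ((lam ^ t - 1 : ℕ) : ZMod p) = 0 := by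
        rw [Nat.cast_sub hle]
        push_cast
        rw [h1, sub_self]
      exact (ZMod.natCast_eq_zero_iff _ _).1 hz
    have hdvdN : p ∣ N := hdvd.trans (Finset.dvd_prod_of_mem _ (by
      rw [Finset.mem_Icc]; omega))
    exact Finset.mem_coe.2 (Nat.mem_primeFactors.2 ⟨hp, hdvdN, hNpos.ne'⟩)
  have hncard : ({p : ℕ | p.Prime ∧ ¬ p ∣ lam ∧ (orderOf (lam : ZMod p) : ℝ) ≤ Δ}.ncard : ℝ)
      ≤ (N.primeFactors.card : ℝ) := by
    have := Set.ncard_le_ncard hsub (N.primeFactors.finite_toSet)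
    rw [Set.ncard_coe_finset] at this
    exact_mod_cast this
  set F₁ := N.primeFactors.filter (· ≤ D) with hF₁
  set F₂ := N.primeFactors.filter (fun p => ¬ p ≤ D) with hF₂
  have hsplit : N.primeFactors.card = F₁.card + F₂.card :=
    (Finset.card_filter_add_card_filter_not (fun p => p ≤ D)).symm
  -- small primes
  have hF₁card : (F₁.card : ℝ) ≤ Δ := by
    have h1 : F₁ ⊆ Finset.Icc 2 D := by
      intro p hp
      rw [hF₁, Finset.mem_filter] at hp
      rw [Finset.mem_Icc]
      exact ⟨(Nat.prime_of_mem_primeFactors hp.1).two_le, hp.2⟩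
    have h2 : F₁.card ≤ D := le_trans (Finset.card_le_card h1) (by simp [Nat.card_Icc])
    calc (F₁.card : ℝ) ≤ (D : ℝ) := by exact_mod_cast h2
      _ ≤ Δ := hDΔ
  -- large primes: (D+1)^card ≤ N
  have hpow : (D + 1) ^ F₂.card ≤ N := by
    have h1 : (D + 1) ^ F₂.card ≤ ∏ p ∈ F₂, p := by
      apply Finset.pow_card_le_prod
      intro p hp
      rw [hF₂, Finset.mem_filter] at hp
      omega
    have h2 : (∏ p ∈ F₂, p) ∣ N := by
      have hd : (∏ p ∈ F₂, p) ∣ ∏ p ∈ N.primeFactors, p :=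
        Finset.prod_dvd_prod_of_subset _ _ _ (Finset.filter_subset _ _)
      exact hd.trans (Nat.prod_primeFactors_dvd N)
    exact h1.trans (Nat.le_of_dvd hNpos h2)
  have hNle : N ≤ lam ^ (D * D) := by
    calc N ≤ ∏ t ∈ Finset.Icc 1 D, lam ^ t := by
            apply Finset.prod_le_prod'
            intro t _
            exact Nat.sub_le _ _
      _ = lam ^ (∑ t ∈ Finset.Icc 1 D, t) := by
            rw [Finset.prod_pow_eq_pow_sum]
      _ ≤ lam ^ (D * D) := by
            apply Nat.pow_le_pow_right (by omega)
            calc (∑ t ∈ Finset.Icc 1 D, t) ≤ ∑ _t ∈ Finset.Icc 1 D, D :=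
                  Finset.sum_le_sum (fun t ht => (Finset.mem_Icc.1 ht).2)
              _ = D * D := by simp [Nat.card_Icc, mul_comm]
  have hlogΔ : (0:ℝ) < Real.log Δ := Real.log_pos (by linarith)
  -- logs
  have hF₂card : (F₂.card : ℝ) * Real.log Δ ≤ Δ ^ 2 * Real.log lam := by
    have h1 : ((D:ℝ) + 1) ^ F₂.card ≤ (N : ℝ) := by exact_mod_cast hpow
    have h2 : (N : ℝ) ≤ (lam : ℝ) ^ (D * D) := by exact_mod_cast hNle
    have hlog1 : (F₂.card : ℝ) * Real.log ((D:ℝ) + 1) ≤ Real.log N := by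
      rw [← Real.log_pow]
      apply Real.log_le_log (by positivity) h1
    have hlog2 : Real.log N ≤ ((D:ℝ) * D) * Real.log lam := by
      calc Real.log N ≤ Real.log ((lam:ℝ) ^ (D * D)) := by
            apply Real.log_le_log (by exact_mod_cast hNpos) h2
        _ = ((D * D : ℕ) : ℝ) * Real.log lam := by rw [Real.log_pow]
        _ = ((D:ℝ) * D) * Real.log lam := by push_cast; ring
    have hDD : ((D:ℝ) * D) * Real.log lam ≤ Δ ^ 2 * Real.log lam := by
      have : (D:ℝ) * D ≤ Δ ^ 2 := by nlinarith [hDΔ, hΔ]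
      nlinarith [hloglam]
    have hΔlog : Real.log Δ ≤ Real.log ((D:ℝ) + 1) :=
      Real.log_le_log (by linarith) (by linarith)
    calc (F₂.card : ℝ) * Real.log Δ ≤ (F₂.card : ℝ) * Real.log ((D:ℝ) + 1) := by
          apply mul_le_mul_of_nonneg_left hΔlog (by positivity)
      _ ≤ Real.log N := hlog1
      _ ≤ ((D:ℝ) * D) * Real.log lam := hlog2
      _ ≤ Δ ^ 2 * Real.log lam := hDD
  -- combine
  have hΔsq : Δ * Real.log Δ ≤ Δ ^ 2 := by
    have h1 : Real.log Δ ≤ Δ - 1 := Real.log_le_sub_one_of_pos (by linarith)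
    nlinarith
  have hF₂' : (F₂.card : ℝ) ≤ Δ ^ 2 * Real.log lam / Real.log Δ := by
    rw [le_div_iff₀ hlogΔ]
    exact hF₂card
  calc ({p : ℕ | p.Prime ∧ ¬ p ∣ lam ∧ (orderOf (lam : ZMod p) : ℝ) ≤ Δ}.ncard : ℝ)
      ≤ (N.primeFactors.card : ℝ) := hncard
    _ = (F₁.card : ℝ) + (F₂.card : ℝ) := by rw [hsplit]; push_cast; ring
    _ ≤ Δ + Δ ^ 2 * Real.log lam / Real.log Δ := add_le_add hF₁card hF₂'
    _ ≤ Δ ^ 2 / Real.log Δ + Δ ^ 2 * Real.log lam / Real.log Δ := by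
        apply add_le_add_left
        rw [le_div_iff₀ hlogΔ]
        exact hΔsq
    _ = (1 + Real.log lam) * Δ ^ 2 / Real.log Δ := by ring
end
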